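/- Let a, a' > 0 with a ≠ a', and let x = (a', 0, …, 0, a) ∈ ℂ^{N+1}. If x' ∈ ℂ^{N+1} satisfies |x̂'(ω)|² = |x̂(ω)|² for all ω on the unit circle and |x'[N]| = a, then x' = λx for some λ ∈ ℂ with |λ| = 1. -/

import Mathlib

open Polynomial

lemma circle_infinite : Set.Infinite {ω : ℂ | ‖ω‖ = 1} := by
  apply Set.infinite_of_injective_forall_mem
    (f := fun k : ℕ => Complex.exp ((((k : ℝ) + 1)⁻¹ : ℝ) * Complex.I))
  · intro j k hjk
    rw [Complex.exp_eq_exp_iff_exists_int] at hjk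
    obtain ⟨n, hn⟩ := hjk
    have him : ((j:ℝ)+1)⁻¹ = ((k:ℝ)+1)⁻¹ + n*(2*Real.pi) := by
      have h2 := congrArg Complex.im hn
      simp only [Complex.add_im, Complex.mul_im, Complex.ofReal_re, Complex.ofReal_im,
        Complex.I_re, Complex.I_im, Complex.intCast_re, Complex.intCast_im,
        Complex.re_ofNat, Complex.im_ofNat, Complex.mul_re] at h2
      convert h2 using 1 <;> ring
    have hj : (0:ℝ) < (j:ℝ)+1 := by positivity
    have hk : (0:ℝ) < (k:ℝ)+1 := by positivity
    have hbj : ((j:ℝ)+1)⁻¹ ≤ 1 := by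
      rw [inv_le_one_iff₀]; right; linarith
    have hbk : ((k:ℝ)+1)⁻¹ ≤ 1 := by
      rw [inv_le_one_iff₀]; right; linarith
    have hpj : (0:ℝ) < ((j:ℝ)+1)⁻¹ := by positivity
    have hpk : (0:ℝ) < ((k:ℝ)+1)⁻¹ := by positivity
    have hpi := Real.pi_gt_three
    have hn0 : n = 0 := by
      rcases lt_trichotomy n 0 with h | h | h
      · have h1 : (n:ℝ) ≤ -1 := by exact_mod_cast (by omega : n ≤ -1)
        have := mul_le_mul_of_nonneg_right h1 (by positivity : (0:ℝ) ≤ 2*Real.pi)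
        nlinarith
      · exact h
      · have h1 : (1:ℝ) ≤ (n:ℝ) := by exact_mod_cast h
        have := mul_le_mul_of_nonneg_right h1 (by positivity : (0:ℝ) ≤ 2*Real.pi)
        nlinarith
    rw [hn0] at him
    have : ((j:ℝ)+1)⁻¹ = ((k:ℝ)+1)⁻¹ := by linarith [him]
    have := inv_injective this
    have : (j:ℝ) = k := by linarith
    exact_mod_cast this
  · intro k
    simp [Complex.norm_exp]

noncomputable def phP (N : ℕ) (y : Fin (N + 1) → ℂ) : Polynomial ℂ :=
  (∑ n : Fin (N + 1), C (y n) * X ^ (n : ℕ)) *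
    (∑ m : Fin (N + 1), C (starRingEnd ℂ (y m)) * X ^ (N - (m : ℕ)))

lemma phP_eval (N : ℕ) (y : Fin (N + 1) → ℂ) (ω : ℂ) (hω : ‖ω‖ = 1) :
    (phP N y).eval ω =
      ((‖∑ n : Fin (N + 1), y n * ω ^ (n : ℕ)‖ ^ 2 : ℝ) : ℂ) * ω ^ N := by
  have hω0 : ω ≠ 0 := by intro h; simp [h] at hω
  have hconj : starRingEnd ℂ ω * ω = 1 := by
    rw [mul_comm, Complex.mul_conj]
    norm_cast
    rw [Complex.normSq_eq_norm_sq, hω]; norm_num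
  set s := ∑ n : Fin (N + 1), y n * ω ^ (n : ℕ) with hs
  have h1 : (phP N y).eval ω = s * ∑ m : Fin (N + 1), starRingEnd ℂ (y m) * ω ^ (N - (m : ℕ)) := by
    simp [phP, eval_finset_sum, hs]
  have h2 : ∑ m : Fin (N + 1), starRingEnd ℂ (y m) * ω ^ (N - (m : ℕ))
      = starRingEnd ℂ s * ω ^ N := by
    rw [hs, map_sum, Finset.sum_mul]
    refine Finset.sum_congr rfl fun m _ => ?_
    have hm : (m : ℕ) ≤ N := Fin.is_le m
    have : ω ^ (N - (m : ℕ)) * (starRingEnd ℂ ω * ω) ^ (m : ℕ) = ω ^ (N - (m:ℕ)) * (starRingEnd ℂ ω) ^ (m:ℕ) * ω ^ (m:ℕ) := by ring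
    rw [map_mul, map_pow]
    calc starRingEnd ℂ (y m) * ω ^ (N - (m : ℕ))
        = starRingEnd ℂ (y m) * (ω ^ (N - (m : ℕ)) * (starRingEnd ℂ ω * ω) ^ (m : ℕ)) := by
          rw [hconj]; ring
      _ = starRingEnd ℂ (y m) * (starRingEnd ℂ ω) ^ (m:ℕ) * (ω ^ (N - (m:ℕ)) * ω ^ (m:ℕ)) := by ring
      _ = starRingEnd ℂ (y m) * (starRingEnd ℂ ω) ^ (m:ℕ) * ω ^ N := by
          rw [← pow_add, Nat.sub_add_cancel hm]
  rw [h1, h2, ← mul_assoc]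
  congr 1
  rw [Complex.mul_conj]
  norm_cast
  rw [Complex.sq_norm]

lemma coeff_term (a b : ℂ) (i j k : ℕ) :
    (C a * X ^ i * (C b * X ^ j)).coeff k = if i + j = k then a * b else 0 := by
  rw [mul_mul_mul_comm, ← C_mul, ← pow_add, coeff_C_mul, coeff_X_pow]
  simp [eq_comm, mul_ite]

lemma phP_coeff_N (N : ℕ) (y : Fin (N + 1) → ℂ) :
    (phP N y).coeff N = ∑ n : Fin (N + 1), y n * starRingEnd ℂ (y n) := by
  rw [phP, Finset.sum_mul_sum]
  rw [finset_sum_coeff]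
  refine Finset.sum_congr rfl fun n _ => ?_
  rw [finset_sum_coeff]
  rw [Finset.sum_eq_single n]
  · have hn : (n : ℕ) ≤ N := Fin.is_le n
    have h : (n:ℕ) + (N - (n:ℕ)) = N := by omega
    rw [coeff_term, if_pos h]
  · intro m _ hm
    have hn : (n : ℕ) ≤ N := Fin.is_le n
    have hmn : (m : ℕ) ≤ N := Fin.is_le m
    have hne : (m : ℕ) ≠ (n : ℕ) := fun h => hm (Fin.ext h)
    have h : (n:ℕ) + (N - (m:ℕ)) ≠ N := by omega
    rw [coeff_term, if_neg h]
  · simp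

lemma phP_coeff_2N (N : ℕ) (hN : 0 < N) (y : Fin (N + 1) → ℂ) :
    (phP N y).coeff (2 * N) = y (Fin.last N) * starRingEnd ℂ (y 0) := by
  rw [phP, Finset.sum_mul_sum, finset_sum_coeff]
  rw [Finset.sum_eq_single (Fin.last N)]
  · rw [finset_sum_coeff, Finset.sum_eq_single (0 : Fin (N + 1))]
    · rw [coeff_term, if_pos (by simp; omega)]
    · intro m _ hm
      have hmn : (m : ℕ) ≤ N := Fin.is_le m
      have hne : (m : ℕ) ≠ 0 := fun h => hm (Fin.ext h)
      have h : (Fin.last N : ℕ) + (N - (m:ℕ)) ≠ 2 * N := by simp; omega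
      rw [coeff_term, if_neg h]
    · simp
  · intro n _ hn
    rw [finset_sum_coeff]
    refine Finset.sum_eq_zero fun m _ => ?_
    have hnn : (n : ℕ) ≤ N := Fin.is_le n
    have hmn : (m : ℕ) ≤ N := Fin.is_le m
    have hne : (n : ℕ) ≠ N := fun h => hn (Fin.ext (by simp [h]))
    have h : (n:ℕ) + (N - (m:ℕ)) ≠ 2 * N := by omega
    rw [coeff_term, if_neg h]
  · simp

/-- For `x = (a', 0, …, 0, a)` with `a, a' > 0`, `a ≠ a'`: any `x'` with the same
Fourier intensity function and `|x'[N]| = a` equals `λ x` for some unimodular `λ`. -/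
theorem uniqueness_with_fixed_last_modulus (N : ℕ) (hN : 0 < N) (a a' : ℝ)
    (ha : 0 < a) (ha' : 0 < a') (hne : a ≠ a') (x x' : Fin (N + 1) → ℂ)
    (hx : x = fun n => if n = 0 then (a' : ℂ) else if n = Fin.last N then (a : ℂ) else 0)
    (hint : ∀ ω : ℂ, ‖ω‖ = 1 →
      ‖∑ n : Fin (N + 1), x' n * ω ^ (n : ℕ)‖ ^ 2 =
        ‖∑ n : Fin (N + 1), x n * ω ^ (n : ℕ)‖ ^ 2)
    (hlast : ‖x' (Fin.last N)‖ = a) :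
    ∃ lam : ℂ, ‖lam‖ = 1 ∧ x' = fun n => lam * x n := by
  have hlast0 : Fin.last N ≠ (0 : Fin (N + 1)) := by
    simp [Fin.ext_iff]; omega
  have hx0 : x 0 = (a' : ℂ) := by rw [hx]; simp
  have hxl : x (Fin.last N) = (a : ℂ) := by rw [hx]; simp [hlast0]
  -- the two intensity polynomials agree
  have hxx' : phP N x' = phP N x := by
    have hroots : {ω : ℂ | ‖ω‖ = 1} ⊆ {ω | (phP N x' - phP N x).IsRoot ω} := by
      intro ω hω
      simp only [Set.mem_setOf_eq] at hω ⊢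
      rw [Polynomial.IsRoot, Polynomial.eval_sub, phP_eval N x' ω hω, phP_eval N x ω hω,
        hint ω hω, sub_self]
    exact sub_eq_zero.mp (Polynomial.eq_zero_of_infinite_isRoot _ (circle_infinite.mono hroots))
  -- coefficient at 2N
  have hc2 : x' (Fin.last N) * starRingEnd ℂ (x' 0) = (a : ℂ) * a' := by
    have h := congrArg (fun p => p.coeff (2 * N)) hxx'
    simp only [phP_coeff_2N N hN] at h
    rw [h, hx0, hxl, Complex.conj_ofReal]
  -- coefficient at N
  have hcN : ∑ n : Fin (N + 1), x' n * starRingEnd ℂ (x' n) = ((a' : ℂ))^2 + ((a : ℂ))^2 := by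
    have h := congrArg (fun p => p.coeff N) hxx'
    simp only [phP_coeff_N N] at h
    rw [h]
    have step : ∀ n : Fin (N + 1), x n * starRingEnd ℂ (x n) =
        (if n = 0 then ((a' : ℂ))^2 else 0) + (if n = Fin.last N then ((a : ℂ))^2 else 0) := by
      intro n
      rw [hx]
      by_cases h0 : n = 0
      · simp [h0, hlast0.symm, Complex.conj_ofReal, sq]
      · by_cases hl : n = Fin.last N
        · simp [hl, hlast0, Complex.conj_ofReal, sq]
        · simp [h0, hl]
    rw [Finset.sum_congr rfl fun n _ => step n, Finset.sum_add_distrib,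
      Finset.sum_ite_eq' Finset.univ, Finset.sum_ite_eq' Finset.univ]
    simp
  have ha0 : (a : ℂ) ≠ 0 := by exact_mod_cast ha.ne'
  have hx'N : x' (Fin.last N) ≠ 0 := by
    intro h; rw [h] at hlast; simp at hlast; exact ha.ne' hlast.symm
  have hns : x' (Fin.last N) * starRingEnd ℂ (x' (Fin.last N)) = ((a : ℂ))^2 := by
    rw [Complex.mul_conj]
    norm_cast
    rw [Complex.normSq_eq_norm_sq, hlast]
  set lam : ℂ := x' (Fin.last N) / a with hlam_def
  have hlam : ‖lam‖ = 1 := by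
    rw [hlam_def, norm_div, hlast, Complex.norm_real,
      Real.norm_eq_abs, abs_of_pos ha, div_self ha.ne']
  have hconj2 : starRingEnd ℂ (x' (Fin.last N)) * x' 0 = (a : ℂ) * a' := by
    have h := congrArg (starRingEnd ℂ) hc2
    simpa [map_mul, Complex.conj_ofReal, mul_comm] using h
  have hkey : x' 0 * (a : ℂ)^2 = x' (Fin.last N) * ((a : ℂ) * a') := by
    linear_combination x' (Fin.last N) * hconj2 - x' 0 * hns
  have hx'0 : x' 0 = lam * a' := by
    rw [hlam_def, div_mul_eq_mul_div, eq_div_iff ha0]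
    apply mul_right_cancel₀ ha0
    linear_combination hkey
  -- middle entries vanish
  have hsumR : ∑ n : Fin (N + 1), Complex.normSq (x' n) = a'^2 + a^2 := by
    have : ((∑ n : Fin (N + 1), Complex.normSq (x' n) : ℝ) : ℂ) = ((a'^2 + a^2 : ℝ) : ℂ) := by
      push_cast
      rw [← hcN]
      exact Finset.sum_congr rfl fun n _ => (Complex.mul_conj (x' n)).symm
    exact_mod_cast this
  have hsq0 : Complex.normSq (x' 0) = a'^2 := by
    rw [hx'0, Complex.normSq_mul, Complex.normSq_eq_norm_sq, Complex.normSq_eq_norm_sq,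
      hlam, Complex.norm_real,
      Real.norm_eq_abs, abs_of_pos ha']
    ring
  have hsqN : Complex.normSq (x' (Fin.last N)) = a^2 := by
    rw [Complex.normSq_eq_norm_sq, hlast]
  have hmid : ∀ n : Fin (N + 1), n ≠ 0 → n ≠ Fin.last N → x' n = 0 := by
    have hsub : ({0, Fin.last N} : Finset (Fin (N + 1))) ⊆ Finset.univ :=
      Finset.subset_univ _
    have hsd := Finset.sum_sdiff (f := fun n => Complex.normSq (x' n)) hsub
    rw [Finset.sum_pair hlast0.symm, hsq0, hsqN, hsumR] at hsd
    have hz : ∑ n ∈ Finset.univ \ ({0, Fin.last N} : Finset (Fin (N + 1))),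
        Complex.normSq (x' n) = 0 := by linarith
    intro n hn0 hnl
    have hmem : n ∈ Finset.univ \ ({0, Fin.last N} : Finset (Fin (N + 1))) := by
      simp [hn0, hnl]
    have := (Finset.sum_eq_zero_iff_of_nonneg
      (fun i _ => Complex.normSq_nonneg (x' i))).mp hz n hmem
    exact Complex.normSq_eq_zero.mp this
  refine ⟨lam, hlam, funext fun n => ?_⟩
  by_cases h0 : n = 0
  · rw [h0, hx0, hx'0]
  · by_cases hl : n = Fin.last N
    · rw [hl, hxl, hlam_def]
      field_simp
    · rw [hmid n h0 hl, hx]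
      simp [h0, hl]
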